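/- (Existence of canonical φ-coherent models, Łukasiewicz case.) Let K be a weighted Ł_n LC knowledge base and φ : ℝ → [0,1]. If K has a φ-coherent model, then K has a canonical φ-coherent model, i.e., a φ-coherent model I = (Δ, ·^I) such that for every φ-coherent model J = (Δ^J, ·^J) of K and every y ∈ Δ^J there is z ∈ Δ with B^I(z) = B^J(y) for all concept names B occurring in K. -/

import Mathlib

/-- Concepts of the boolean description logic LC. -/
inductive LC (NC : Type) : Type where
  | top : LC NC
  | bot : LC NC
  | nm : NC → LC NC
  | inter : LC NC → LC NC → LC NC
  | union : LC NC → LC NC → LC NC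
  | compl : LC NC → LC NC

/-- The concept names occurring in a concept. -/
def LC.names {NC : Type} : LC NC → Set NC
  | .top => ∅
  | .bot => ∅
  | .nm A => {A}
  | .inter C D => C.names ∪ D.names
  | .union C D => C.names ∪ D.names
  | .compl C => C.names

/-- The finite truth space C_n = {0, 1/n, ..., (n-1)/n, 1} ⊆ [0,1]. -/
def Cn (n : ℕ) : Set ℝ := {r : ℝ | ∃ i : ℕ, i ≤ n ∧ r = (i : ℝ) / (n : ℝ)}

/-- Łukasiewicz-semantics evaluation of LC concepts. -/
def lval {NC Δ : Type} (v : NC → Δ → ℝ) : LC NC → Δ → ℝ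
  | .top => fun _ => 1
  | .bot => fun _ => 0
  | .nm A => v A
  | .inter C D => fun x => max (lval v C x + lval v D x - 1) 0
  | .union C D => fun x => min (lval v C x + lval v D x) 1
  | .compl C => fun x => 1 - lval v C x

/-- Comparison operators θ ∈ {≥, ≤, >, <}. -/
inductive Ineq : Type where
  | ge : Ineq
  | le : Ineq
  | gt : Ineq
  | lt : Ineq

def Ineq.holds : Ineq → ℝ → ℝ → Prop
  | .ge, a, b => a ≥ b
  | .le, a, b => a ≤ b
  | .gt, a, b => a > b
  | .lt, a, b => a < b

/-- A weighted LC knowledge base over distinguished concepts C_1, …, C_k: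
a TBox of graded inclusions, an ABox of graded assertions, and for each
distinguished concept `Ci i` a finite set of weighted typicality inclusions
T(Ci i) ⊑ D i h with real weight w i h. -/
structure WKB (NC NI : Type) : Type where
  k : ℕ
  Ci : Fin k → LC NC
  H : Fin k → ℕ
  D : (i : Fin k) → Fin (H i) → LC NC
  w : (i : Fin k) → Fin (H i) → ℝ
  tbox : List (LC NC × LC NC × Ineq × ℝ)
  abox : List (LC NC × NI × Ineq × ℝ)
  tbox_bound : ∀ t ∈ tbox, t.2.2.2 ∈ Set.Icc (0 : ℝ) 1
  abox_bound : ∀ t ∈ abox, t.2.2.2 ∈ Set.Icc (0 : ℝ) 1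

/-- The concept names occurring in the knowledge base K. -/
def WKB.names {NC NI : Type} (K : WKB NC NI) : Set NC :=
  (⋃ i : Fin K.k, (K.Ci i).names) ∪
    (⋃ i : Fin K.k, ⋃ h : Fin (K.H i), (K.D i h).names) ∪
    (⋃ t ∈ K.tbox, t.1.names ∪ t.2.1.names) ∪
    (⋃ t ∈ K.abox, t.1.names)

/-- A finitely many-valued interpretation: concept names take values in C_n. -/
def IsInterp {NC Δ : Type} (n : ℕ) (val : NC → Δ → ℝ) : Prop :=
  ∀ A x, val A x ∈ Cn n

/-- Łukasiewicz implication: a ▷ b = min (1 - a + b) 1. -/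
noncomputable def limp (a b : ℝ) : ℝ := min (1 - a + b) 1

/-- Satisfaction of the TBox: for every inclusion C ⊑ D θ α,
(inf_x C(x) ▷ D(x)) θ α holds. -/
def SatTBoxL {NC NI Δ : Type} (K : WKB NC NI) (val : NC → Δ → ℝ) : Prop :=
  ∀ t ∈ K.tbox,
    Ineq.holds t.2.2.1 (⨅ x : Δ, limp (lval val t.1 x) (lval val t.2.1 x)) t.2.2.2

/-- Satisfaction of the ABox: for every assertion C(a) θ α, C(a^I) θ α holds. -/
def SatABoxL {NC NI Δ : Type} (K : WKB NC NI) (val : NC → Δ → ℝ) (ind : NI → Δ) : Prop :=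
  ∀ t ∈ K.abox, Ineq.holds t.2.2.1 (lval val t.1 (ind t.2.1)) t.2.2.2

/-- The weighted sum Σ_h w_{i,h} · D_{i,h}(x). -/
noncomputable def sumwL {NC NI Δ : Type} (K : WKB NC NI) (val : NC → Δ → ℝ)
    (i : Fin K.k) (x : Δ) : ℝ :=
  ∑ h : Fin (K.H i), K.w i h * lval val (K.D i h) x

/-- The weight W_i(x) ∈ ℝ ∪ {−∞} of x w.r.t. the distinguished concept C_i. -/
noncomputable def WgtL {NC NI Δ : Type} (K : WKB NC NI) (val : NC → Δ → ℝ)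
    (i : Fin K.k) (x : Δ) : EReal :=
  if 0 < lval val (K.Ci i) x then ((sumwL K val i x : ℝ) : EReal) else ⊥

/-- Faithful multipreference model: an interpretation satisfying the TBox and the
ABox such that x <_{C_i} y implies W_i(x) > W_i(y). -/
def IsFaithfulModelL {NC NI Δ : Type} (n : ℕ) (K : WKB NC NI)
    (val : NC → Δ → ℝ) (ind : NI → Δ) : Prop :=
  IsInterp n val ∧ SatTBoxL K val ∧ SatABoxL K val ind ∧
    ∀ (i : Fin K.k) (x y : Δ),
      lval val (K.Ci i) x > lval val (K.Ci i) y → WgtL K val i x > WgtL K val i y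

/-- Coherent multipreference model: an interpretation satisfying the TBox and the
ABox such that x <_{C_i} y iff W_i(x) > W_i(y). -/
def IsCoherentModelL {NC NI Δ : Type} (n : ℕ) (K : WKB NC NI)
    (val : NC → Δ → ℝ) (ind : NI → Δ) : Prop :=
  IsInterp n val ∧ SatTBoxL K val ∧ SatABoxL K val ind ∧
    ∀ (i : Fin K.k) (x y : Δ),
      (lval val (K.Ci i) x > lval val (K.Ci i) y ↔ WgtL K val i x > WgtL K val i y)

/-- φ-coherent multipreference model: an interpretation satisfying the TBox and
the ABox such that C_i(x) = φ(Σ_h w_{i,h} · D_{i,h}(x)) for all i and x. -/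
def IsPhiCoherentModelL {NC NI Δ : Type} (n : ℕ) (K : WKB NC NI) (φ : ℝ → ℝ)
    (val : NC → Δ → ℝ) (ind : NI → Δ) : Prop :=
  IsInterp n val ∧ SatTBoxL K val ∧ SatABoxL K val ind ∧
    ∀ (i : Fin K.k) (x : Δ), lval val (K.Ci i) x = φ (sumwL K val i x)

section CanonicalAux

variable {NC NI : Type}

lemma lval_congr {Δ Δ' : Type} {v : NC → Δ → ℝ} {v' : NC → Δ' → ℝ} {x : Δ} {y : Δ'}
    (h : ∀ A, v A x = v' A y) : ∀ C : LC NC, lval v C x = lval v' C y := by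
  intro C
  induction C <;> simp [lval, *]

lemma sumwL_congr {Δ Δ' : Type} (K : WKB NC NI) {v : NC → Δ → ℝ} {v' : NC → Δ' → ℝ}
    {x : Δ} {y : Δ'} (h : ∀ A, v A x = v' A y) (i : Fin K.k) :
    sumwL K v i x = sumwL K v' i y := by
  unfold sumwL
  exact Finset.sum_congr rfl fun hh _ => by rw [lval_congr h]

lemma Cn_compl {n : ℕ} (hn : 1 ≤ n) {r : ℝ} (h : r ∈ Cn n) : 1 - r ∈ Cn n := by
  obtain ⟨i, hi, rfl⟩ := h
  have hn0 : (n : ℝ) ≠ 0 := by positivity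
  refine ⟨n - i, Nat.sub_le _ _, ?_⟩
  push_cast [Nat.cast_sub hi]
  field_simp

lemma Cn_inter {n : ℕ} (hn : 1 ≤ n) {a b : ℝ} (ha : a ∈ Cn n) (hb : b ∈ Cn n) :
    max (a + b - 1) 0 ∈ Cn n := by
  obtain ⟨i, hi, rfl⟩ := ha
  obtain ⟨j, hj, rfl⟩ := hb
  have hn0 : (0 : ℝ) < n := by positivity
  by_cases hc : i + j ≤ n
  · have h1 : (i : ℝ) / n + (j : ℝ) / n - 1 ≤ 0 := by
      rw [← add_div, sub_nonpos, div_le_one hn0]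
      exact_mod_cast hc
    rw [max_eq_right h1]
    exact ⟨0, Nat.zero_le _, by simp⟩
  · push_neg at hc
    have hle : n ≤ i + j := hc.le
    have h1 : (0 : ℝ) ≤ (i : ℝ) / n + (j : ℝ) / n - 1 := by
      rw [← add_div, sub_nonneg, le_div_iff₀ hn0, one_mul]
      exact_mod_cast hle
    rw [max_eq_left h1]
    refine ⟨i + j - n, by omega, ?_⟩
    push_cast [Nat.cast_sub hle]
    field_simp

lemma Cn_union {n : ℕ} (hn : 1 ≤ n) {a b : ℝ} (ha : a ∈ Cn n) (hb : b ∈ Cn n) :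
    min (a + b) 1 ∈ Cn n := by
  have h := Cn_compl hn (Cn_inter hn (Cn_compl hn ha) (Cn_compl hn hb))
  have heq : 1 - max ((1 - a) + (1 - b) - 1) 0 = min (a + b) 1 := by
    rcases le_total (a + b) 1 with hab | hab
    · rw [min_eq_left hab, max_eq_left (by linarith)]; ring
    · rw [min_eq_right hab, max_eq_right (by linarith)]; ring
  rwa [heq] at h

lemma Cn_limp {n : ℕ} (hn : 1 ≤ n) {a b : ℝ} (ha : a ∈ Cn n) (hb : b ∈ Cn n) :
    limp a b ∈ Cn n := by
  have h := Cn_compl hn (Cn_inter hn ha (Cn_compl hn hb))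
  have heq : 1 - max (a + (1 - b) - 1) 0 = limp a b := by
    unfold limp
    rcases le_total a b with hab | hab
    · rw [max_eq_right (by linarith), min_eq_right (by linarith)]; ring
    · rw [max_eq_left (by linarith), min_eq_left (by linarith)]; ring
  rwa [heq] at h

lemma lval_mem_Cn {n : ℕ} (hn : 1 ≤ n) {Δ : Type} {v : NC → Δ → ℝ}
    (hv : IsInterp n v) (C : LC NC) (x : Δ) : lval v C x ∈ Cn n := by
  induction C with
  | top =>
      have hn0 : (n : ℝ) ≠ 0 := by positivity
      exact ⟨n, le_refl _, by simp [lval, div_self hn0]⟩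
  | bot => exact ⟨0, Nat.zero_le _, by simp [lval]⟩
  | nm A => exact hv A x
  | inter C D ihC ihD => exact Cn_inter hn ihC ihD
  | union C D ihC ihD => exact Cn_union hn ihC ihD
  | compl C ihC => exact Cn_compl hn ihC

lemma Cn_finite (n : ℕ) : (Cn n).Finite := by
  have : Cn n ⊆ (fun i : ℕ => (i : ℝ) / n) '' (Set.Iic n) := by
    rintro r ⟨i, hi, rfl⟩
    exact ⟨i, hi, rfl⟩
  exact ((Set.finite_Iic n).image _).subset this

lemma range_finite_of_Cn {n : ℕ} {Δ : Type} {F : Δ → ℝ} (h : ∀ x, F x ∈ Cn n) :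
    (Set.range F).Finite :=
  (Cn_finite n).subset (Set.range_subset_iff.mpr h)

lemma exists_eq_iInf_of_finite {Δ : Type} [Nonempty Δ] {F : Δ → ℝ}
    (hfin : (Set.range F).Finite) : ∃ z, F z = ⨅ x, F x := by
  have h1 : sInf (Set.range F) ∈ Set.range F :=
    (Set.range_nonempty F).csInf_mem hfin
  obtain ⟨z, hz⟩ := h1
  exact ⟨z, hz⟩

/-- Trace realizability: f is the full valuation of some point of some φ-coherent model. -/
def TraceProp (n : ℕ) (K : WKB NC NI) (φ : ℝ → ℝ) (f : NC → ℝ) : Prop :=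
  ∃ (Δ' : Type) (_ : Nonempty Δ') (val' : NC → Δ' → ℝ) (ind' : NI → Δ'),
    IsPhiCoherentModelL n K φ val' ind' ∧ ∃ y : Δ', ∀ B, val' B y = f B

/-- The canonical domain. -/
def CanDom (n : ℕ) (K : WKB NC NI) (φ : ℝ → ℝ) : Type :=
  {f : NC → ℝ // TraceProp n K φ f}

end CanonicalAux

/-- If a weighted Ł_n LC knowledge base K has a φ-coherent model, then it has
a canonical φ-coherent model: a φ-coherent model I such that for every
φ-coherent model J of K and every y in the domain of J there is z in the domain
of I agreeing with y on all concept names occurring in K. -/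
theorem exists_canonical_phiCoherent_model_lukasiewicz
    {NC NI : Type} (n : ℕ) (hn : 1 ≤ n) (K : WKB NC NI)
    (φ : ℝ → ℝ) (hφ : ∀ x : ℝ, φ x ∈ Set.Icc (0 : ℝ) 1)
    (h : ∃ (Δ : Type) (_ : Nonempty Δ) (val : NC → Δ → ℝ) (ind : NI → Δ),
        IsPhiCoherentModelL n K φ val ind) :
    ∃ (Δ : Type) (_ : Nonempty Δ) (val : NC → Δ → ℝ) (ind : NI → Δ),
      IsPhiCoherentModelL n K φ val ind ∧
        ∀ (Δ' : Type) (_ : Nonempty Δ') (val' : NC → Δ' → ℝ) (ind' : NI → Δ'),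
          IsPhiCoherentModelL n K φ val' ind' →
            ∀ y : Δ', ∃ z : Δ, ∀ B ∈ K.names, val B z = val' B y := by
  classical
  obtain ⟨Δ₀, hne₀, val₀, ind₀, hM₀⟩ := h
  let cval : NC → CanDom n K φ → ℝ := fun A z => z.1 A
  have mk0P : ∀ x : Δ₀, TraceProp n K φ (fun B => val₀ B x) :=
    fun x => ⟨Δ₀, hne₀, val₀, ind₀, hM₀, x, fun _ => rfl⟩
  let mk0 : Δ₀ → CanDom n K φ := fun x => ⟨fun B => val₀ B x, mk0P x⟩
  have hΔne : Nonempty (CanDom n K φ) := hne₀.elim fun x => ⟨mk0 x⟩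
  haveI := hΔne
  have hmk0 : ∀ (x : Δ₀) (A : NC), cval A (mk0 x) = val₀ A x := fun _ _ => rfl
  have hInterp : IsInterp n cval := by
    intro A z
    obtain ⟨Δ', _, val', _, hM', y, hy⟩ := z.2
    have : cval A z = val' A y := (hy A).symm
    rw [this]
    exact hM'.1 A y
  have hlvalmem : ∀ (C : LC NC) (z : CanDom n K φ), lval cval C z ∈ Cn n :=
    fun C z => lval_mem_Cn hn hInterp C z
  have hT : SatTBoxL K cval := by
    intro t ht
    obtain ⟨C, D, θ, α⟩ := t
    show Ineq.holds θ (⨅ z : CanDom n K φ, limp (lval cval C z) (lval cval D z)) α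
    have hFmem : ∀ z : CanDom n K φ, limp (lval cval C z) (lval cval D z) ∈ Cn n :=
      fun z => Cn_limp hn (hlvalmem C z) (hlvalmem D z)
    have hFin : (Set.range fun z : CanDom n K φ =>
        limp (lval cval C z) (lval cval D z)).Finite := range_finite_of_Cn hFmem
    have hBdd := hFin.bddBelow
    -- transfer: each canonical value comes from a model satisfying the TBox entry
    have hpt : ∀ z : CanDom n K φ, ∃ (Δ' : Type) (_ : Nonempty Δ')
        (val' : NC → Δ' → ℝ), SatTBoxL K val' ∧ IsInterp n val' ∧ ∃ y : Δ',
          limp (lval cval C z) (lval cval D z)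
            = limp (lval val' C y) (lval val' D y) := by
      intro z
      obtain ⟨Δ', hne', val', ind', hM', y, hy⟩ := z.2
      have h1 : ∀ A, cval A z = val' A y := fun A => (hy A).symm
      exact ⟨Δ', hne', val', hM'.2.1, hM'.1, y, by rw [lval_congr h1, lval_congr h1]⟩
    -- attainment in the original model
    have hFin₀ : (Set.range fun x : Δ₀ =>
        limp (lval val₀ C x) (lval val₀ D x)).Finite :=
      range_finite_of_Cn fun x =>
        Cn_limp hn (lval_mem_Cn hn hM₀.1 C x) (lval_mem_Cn hn hM₀.1 D x)
    haveI := hne₀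
    have hT₀ := hM₀.2.1 (C, D, θ, α) ht
    have hmk0F : ∀ x : Δ₀, limp (lval cval C (mk0 x)) (lval cval D (mk0 x))
        = limp (lval val₀ C x) (lval val₀ D x) := by
      intro x
      rw [lval_congr (hmk0 x), lval_congr (hmk0 x)]
    cases θ with
    | ge =>
      refine le_ciInf fun z => ?_
      obtain ⟨Δ', hne', val', hTb', hI', y, hy⟩ := hpt z
      haveI := hne'
      rw [hy]
      have hFin' : (Set.range fun x : Δ' =>
          limp (lval val' C x) (lval val' D x)).Finite :=
        range_finite_of_Cn fun x =>
          Cn_limp hn (lval_mem_Cn hn hI' C x) (lval_mem_Cn hn hI' D x)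
      have hle : (⨅ x : Δ', limp (lval val' C x) (lval val' D x))
          ≤ limp (lval val' C y) (lval val' D y) := ciInf_le hFin'.bddBelow y
      exact le_trans (hTb' (C, D, Ineq.ge, α) ht) hle
    | le =>
      obtain ⟨x₀, hx₀⟩ := exists_eq_iInf_of_finite hFin₀
      have h1 : limp (lval cval C (mk0 x₀)) (lval cval D (mk0 x₀)) ≤ α := by
        rw [hmk0F x₀, hx₀]
        exact hT₀
      exact le_trans (ciInf_le hBdd (mk0 x₀)) h1
    | gt =>
      obtain ⟨z₀, hz₀⟩ := exists_eq_iInf_of_finite hFin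
      rw [← hz₀]
      obtain ⟨Δ', hne', val', hTb', hI', y, hy⟩ := hpt z₀
      haveI := hne'
      rw [hy]
      have hFin' : (Set.range fun x : Δ' =>
          limp (lval val' C x) (lval val' D x)).Finite :=
        range_finite_of_Cn fun x =>
          Cn_limp hn (lval_mem_Cn hn hI' C x) (lval_mem_Cn hn hI' D x)
      have hle : (⨅ x : Δ', limp (lval val' C x) (lval val' D x))
          ≤ limp (lval val' C y) (lval val' D y) := ciInf_le hFin'.bddBelow y
      exact lt_of_lt_of_le (hTb' (C, D, Ineq.gt, α) ht) hle
    | lt =>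
      obtain ⟨x₀, hx₀⟩ := exists_eq_iInf_of_finite hFin₀
      have h1 : limp (lval cval C (mk0 x₀)) (lval cval D (mk0 x₀)) < α := by
        rw [hmk0F x₀, hx₀]
        exact hT₀
      exact lt_of_le_of_lt (ciInf_le hBdd (mk0 x₀)) h1
  refine ⟨CanDom n K φ, hΔne, cval, fun a => mk0 (ind₀ a), ⟨hInterp, hT, ?_, ?_⟩, ?_⟩
  · -- ABox
    intro t ht
    have h1 : lval cval t.1 (mk0 (ind₀ t.2.1)) = lval val₀ t.1 (ind₀ t.2.1) :=
      lval_congr (hmk0 (ind₀ t.2.1)) t.1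
    rw [h1]
    exact hM₀.2.2.1 t ht
  · -- φ-coherence
    intro i z
    obtain ⟨Δ', hne', val', ind', hM', y, hy⟩ := z.2
    have h1 : ∀ A, cval A z = val' A y := fun A => (hy A).symm
    rw [lval_congr h1, sumwL_congr K h1]
    exact hM'.2.2.2 i y
  · -- canonicity
    intro Δ' hne' val' ind' hM' y
    exact ⟨⟨fun B => val' B y, Δ', hne', val', ind', hM', y, fun _ => rfl⟩,
      fun B _ => rfl⟩
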